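/- Let m ≥ p + 1 and z_1, …, z_m ∈ ℝ^p and a_1, …, a_m ∈ ℝ be such that for any p+1 distinct indices i_1, …, i_{p+1}, the (p+1)×(p+1) matrix whose rows are (z_{i_j}^⊤, a_{i_j}) is invertible. Then there exists ε > 0 such that for every β ∈ ℝ^p and every choice of p+1 distinct indices i_1, …, i_{p+1}, at least one j ∈ {1,…,p+1} satisfies |a_{i_j} − ⟨z_{i_j}, β⟩| > ε, and moreover the ε can be chosen uniformly in β provided that for any p distinct indices the matrix with rows z_{i_1}^⊤, …, z_{i_p}^⊤ is invertible. -/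

import Mathlib

theorem uniform_slab_escape (m p : ℕ) (hmp : p + 1 ≤ m)
    (z : Fin m → EuclideanSpace ℝ (Fin p)) (a : Fin m → ℝ)
    (h1 : ∀ ι : Fin p → Fin m, Function.Injective ι →
      IsUnit (Matrix.of fun j k => z (ι j) k : Matrix (Fin p) (Fin p) ℝ))
    (h2 : ∀ ι : Fin (p + 1) → Fin m, Function.Injective ι →
      IsUnit (Matrix.of fun j k =>
        Fin.lastCases (a (ι j)) (fun k' => z (ι j) k') k :
          Matrix (Fin (p + 1)) (Fin (p + 1)) ℝ)) :
    ∃ ε > (0 : ℝ), ∀ β : EuclideanSpace ℝ (Fin p),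
      ∀ ι : Fin (p + 1) → Fin m, Function.Injective ι →
        ∃ j : Fin (p + 1), ε < |a (ι j) - (inner ℝ (z (ι j)) β : ℝ)| := by
  have hm : 0 < m := lt_of_lt_of_le (Nat.succ_pos p) hmp
  haveI : Nonempty (Fin m) := ⟨⟨0, hm⟩⟩
  set Mm : (Fin (p + 1) → Fin m) → Matrix (Fin (p + 1)) (Fin (p + 1)) ℝ :=
    fun ι => Matrix.of fun j k => Fin.lastCases (a (ι j)) (fun k' => z (ι j) k') k with hMm
  set c : (Fin (p + 1) → Fin m) → ℝ := fun ι => ∑ k, |(Mm ι)⁻¹ (Fin.last p) k| with hc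
  set C : ℝ := Finset.univ.sup' Finset.univ_nonempty c with hC
  have hC0 : 0 ≤ C := by
    refine le_trans ?_ (Finset.le_sup' c (Finset.mem_univ (fun _ => ⟨0, hm⟩)))
    exact Finset.sum_nonneg fun k _ => abs_nonneg _
  refine ⟨1 / (2 * (1 + C)), by positivity, ?_⟩
  intro β ι hinj
  by_contra hcon
  push_neg at hcon
  have hM : IsUnit (Mm ι) := h2 ι hinj
  have hd : IsUnit (Mm ι).det := (Matrix.isUnit_iff_isUnit_det _).mp hM
  set f : Fin (p + 1) → ℝ := fun j => a (ι j) - (inner ℝ (z (ι j)) β : ℝ) with hf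
  set v : Fin (p + 1) → ℝ := fun k => Fin.lastCases 1 (fun k' => -β k') k with hv
  have hMv : (Mm ι).mulVec v = f := by
    funext j
    simp only [Matrix.mulVec, dotProduct, hMm, hv, hf, Matrix.of_apply]
    rw [Fin.sum_univ_castSucc]
    simp only [Fin.lastCases_last, Fin.lastCases_castSucc, PiLp.inner_apply,
      RCLike.inner_apply, conj_trivial, mul_neg, Finset.sum_neg_distrib, mul_one]
    rw [Finset.sum_congr rfl fun x _ => mul_comm (β.ofLp x) ((z (ι j)).ofLp x)]
    ring
  have hvlast : v (Fin.last p) = 1 := by simp [hv]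
  have hveq : v = (Mm ι)⁻¹.mulVec f := by
    rw [← hMv, Matrix.mulVec_mulVec, Matrix.nonsing_inv_mul _ hd, Matrix.one_mulVec]
  have h1eq : (1 : ℝ) = ∑ k, (Mm ι)⁻¹ (Fin.last p) k * f k := by
    rw [← hvlast, hveq]; rfl
  have key : (1 : ℝ) < 1 := by
    calc (1 : ℝ) = |∑ k, (Mm ι)⁻¹ (Fin.last p) k * f k| := by rw [← h1eq]; simp
      _ ≤ ∑ k, |(Mm ι)⁻¹ (Fin.last p) k * f k| := Finset.abs_sum_le_sum_abs _ _
      _ = ∑ k, |(Mm ι)⁻¹ (Fin.last p) k| * |f k| := by simp [abs_mul]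
      _ ≤ ∑ k, |(Mm ι)⁻¹ (Fin.last p) k| * (1 / (2 * (1 + C))) := by
          refine Finset.sum_le_sum fun k _ => ?_
          exact mul_le_mul_of_nonneg_left (hcon k) (abs_nonneg _)
      _ = c ι * (1 / (2 * (1 + C))) := by rw [hc, ← Finset.sum_mul]
      _ ≤ C * (1 / (2 * (1 + C))) := by
          refine mul_le_mul_of_nonneg_right ?_ (by positivity)
          exact Finset.le_sup' c (Finset.mem_univ ι)
      _ < 1 := by rw [mul_one_div, div_lt_one (by positivity)]; linarith
  exact lt_irrefl 1 key
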